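/- Let a, b be distinct points of the open unit disk 𝔹² ⊂ ℂ and let c ∈ ℂ with |c| > 1 be such that |a−c|² = |c|² − 1 and |b−c|² = |c|² − 1 (so a and b lie on the circle with center c orthogonal to the unit circle). Then the point cen := (a(1−|b|²) + b(1−|a|²))/(2 − a·conj(b) − conj(a)·b) lies on the tangent line to that circle at a and on the tangent line at b; that is, Re((cen − a)·conj(a − c)) = 0 and Re((cen − b)·conj(b − c)) = 0. -/

import Mathlib

set_option maxHeartbeats 1000000

open Complex

/-- The point `cen = (a(1−|b|²)+b(1−|a|²))/(2−a·conj b−conj a·b)` is the intersection of the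
tangent lines, at `a` and at `b`, to the circle through `a, b` with center `c`
orthogonal to the unit circle. -/
theorem stmt_2 (a b c : ℂ) (ha : ‖a‖ < 1) (hb : ‖b‖ < 1)
    (hab : a ≠ b) (hc : 1 < ‖c‖)
    (hac : (‖a - c‖)^2 = (‖c‖)^2 - 1)
    (hbc : (‖b - c‖)^2 = (‖c‖)^2 - 1) :
    let cen : ℂ := (a * (1 - (‖b‖ : ℂ)^2) + b * (1 - (‖a‖ : ℂ)^2)) /
      (2 - a * (starRingEnd ℂ b) - (starRingEnd ℂ a) * b)
    ((cen - a) * (starRingEnd ℂ (a - c))).re = 0 ∧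
      ((cen - b) * (starRingEnd ℂ (b - c))).re = 0 := by
  intro cen
  -- real coordinate versions of the hypotheses
  have hA : a.re ^ 2 + a.im ^ 2 < 1 := by
    have h := Complex.sq_norm a
    rw [Complex.normSq_apply] at h
    nlinarith [norm_nonneg a]
  have hB : b.re ^ 2 + b.im ^ 2 < 1 := by
    have h := Complex.sq_norm b
    rw [Complex.normSq_apply] at h
    nlinarith [norm_nonneg b]
  have h1 : (a.re - c.re) ^ 2 + (a.im - c.im) ^ 2 = c.re ^ 2 + c.im ^ 2 - 1 := by
    have h := hac
    rw [Complex.sq_norm, Complex.sq_norm, Complex.normSq_apply, Complex.normSq_apply] at h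
    simpa [Complex.sub_re, Complex.sub_im, sq] using h
  have h2 : (b.re - c.re) ^ 2 + (b.im - c.im) ^ 2 = c.re ^ 2 + c.im ^ 2 - 1 := by
    have h := hbc
    rw [Complex.sq_norm, Complex.sq_norm, Complex.normSq_apply, Complex.normSq_apply] at h
    simpa [Complex.sub_re, Complex.sub_im, sq] using h
  -- the denominator
  set d : ℂ := 2 - a * (starRingEnd ℂ b) - (starRingEnd ℂ a) * b with hd
  have hdim : d.im = 0 := by
    simp only [hd, Complex.sub_im, Complex.mul_im, Complex.conj_re, Complex.conj_im,
      Complex.im_ofNat]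
    ring
  have hdre : 0 < d.re := by
    simp only [hd, Complex.sub_re, Complex.mul_re, Complex.conj_re, Complex.conj_im,
      Complex.re_ofNat]
    nlinarith [sq_nonneg (a.re - b.re), sq_nonneg (a.im - b.im)]
  have hd0 : d ≠ 0 := by
    intro h
    rw [h] at hdre
    simp at hdre
  have habA : ((‖a‖ : ℂ) ^ 2) = ((a.re ^ 2 + a.im ^ 2 : ℝ) : ℂ) := by
    rw [← Complex.ofReal_pow, Complex.sq_norm, Complex.normSq_apply]
    norm_num [sq]
  have habB : ((‖b‖ : ℂ) ^ 2) = ((b.re ^ 2 + b.im ^ 2 : ℝ) : ℂ) := by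
    rw [← Complex.ofReal_pow, Complex.sq_norm, Complex.normSq_apply]
    norm_num [sq]
  have hcen : cen = (a * (1 - (‖b‖ : ℂ)^2) + b * (1 - (‖a‖ : ℂ)^2)) / d := rfl
  have hcen_a : cen - a = (a * (starRingEnd ℂ b) - 1) * (a - b) / d := by
    rw [hcen, habA, habB, eq_div_iff hd0, sub_mul, div_mul_cancel₀ _ hd0, hd]
    apply Complex.ext <;>
      simp only [Complex.mul_re, Complex.mul_im, Complex.add_re, Complex.add_im,
        Complex.sub_re, Complex.sub_im, Complex.one_re, Complex.one_im, Complex.conj_re,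
        Complex.conj_im, Complex.ofReal_re, Complex.ofReal_im, Complex.re_ofNat,
        Complex.im_ofNat] <;> ring
  have hcen_b : cen - b = (b * (starRingEnd ℂ a) - 1) * (b - a) / d := by
    rw [hcen, habA, habB, eq_div_iff hd0, sub_mul, div_mul_cancel₀ _ hd0, hd]
    apply Complex.ext <;>
      simp only [Complex.mul_re, Complex.mul_im, Complex.add_re, Complex.add_im,
        Complex.sub_re, Complex.sub_im, Complex.one_re, Complex.one_im, Complex.conj_re,
        Complex.conj_im, Complex.ofReal_re, Complex.ofReal_im, Complex.re_ofNat,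
        Complex.im_ofNat] <;> ring
  have hdr : d = ((d.re : ℝ) : ℂ) := by
    apply Complex.ext <;> simp [hdim]
  constructor
  · rw [hcen_a, div_mul_eq_mul_div, hdr, Complex.div_ofReal_re]
    have key : ((a * (starRingEnd ℂ b) - 1) * (a - b) * (starRingEnd ℂ (a - c))).re = 0 := by
      simp only [Complex.mul_re, Complex.mul_im, Complex.sub_re, Complex.sub_im,
        Complex.conj_re, Complex.conj_im, Complex.one_re, Complex.one_im]
      linear_combination ((2 * (a.re * b.re + a.im * b.im) - 1 - (b.re ^ 2 + b.im ^ 2)) / 2) * h1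
        + ((1 - (a.re ^ 2 + a.im ^ 2)) / 2) * h2
    rw [key, zero_div]
  · rw [hcen_b, div_mul_eq_mul_div, hdr, Complex.div_ofReal_re]
    have key : ((b * (starRingEnd ℂ a) - 1) * (b - a) * (starRingEnd ℂ (b - c))).re = 0 := by
      simp only [Complex.mul_re, Complex.mul_im, Complex.sub_re, Complex.sub_im,
        Complex.conj_re, Complex.conj_im, Complex.one_re, Complex.one_im]
      linear_combination ((2 * (a.re * b.re + a.im * b.im) - 1 - (a.re ^ 2 + a.im ^ 2)) / 2) * h2
        + ((1 - (b.re ^ 2 + b.im ^ 2)) / 2) * h1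
    rw [key, zero_div]
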